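/- Distribution function of a single spin: for the Ising model on a finite graph G=(V,E) with field h and p_{ij}=1-exp(-2βJ_{ij}), λ_{β,h,V}(σ_x = ±1) = 1/2 ± (1/2) φ_{p,h,G}(tanh(h(K_t))), where K_t is the connected component of x under the random-cluster measure φ_{p,h,G} and h(K) = β Σ_{i∈K} h_i. Consequently λ_{β,h,V}(σ_x) = φ_{p,h,G}(tanh(h(K_t))). -/

import Mathlib

open Finset

noncomputable section

variable {V : Type}

/-- The spin value (±1) attached to a Boolean spin (`true ↔ +1`, `false ↔ -1`). -/
def spin (b : Bool) : ℝ := if b then 1 else -1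

/-- The subgraph of `G` whose open edges are the edges in `F`. -/
def openSub (G : SimpleGraph V) (F : Finset (Sym2 V)) : SimpleGraph V where
  Adj i j := G.Adj i j ∧ s(i, j) ∈ F
  symm := by
    constructor
    intro i j h
    exact ⟨h.1.symm, by rw [Sym2.eq_swap]; exact h.2⟩
  loopless := ⟨fun _ h => G.irrefl h.1⟩

instance [Fintype V] (H : SimpleGraph V) : Fintype H.ConnectedComponent := by
  classical exact Fintype.ofSurjective H.connectedComponentMk Quot.exists_rep

/-- The vertex set of a connected component, as a `Finset`. -/
def compSupp [Fintype V] (H : SimpleGraph V) (c : H.ConnectedComponent) : Finset V := by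
  classical exact Finset.univ.filter fun v => H.connectedComponentMk v = c

/-- Kronecker delta `δ_{σ_i,σ_j}` of a configuration on an (unordered) edge. -/
def eDelta {S : Type} [DecidableEq S] (σ : V → S) : Sym2 V → ℝ :=
  Sym2.lift ⟨fun i j => if σ i = σ j then 1 else 0, fun _ _ => by simp [eq_comm]⟩

/-- Product of spins `σ_i σ_j` on an (unordered) edge. -/
def eProd (σ : V → Bool) : Sym2 V → ℝ :=
  Sym2.lift ⟨fun i j => spin (σ i) * spin (σ j), fun _ _ => mul_comm _ _⟩

/-- The consistency indicator `Δ(σ,ω)`: equal to `1` iff `σ` is constant on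
every open edge of the configuration `F`. -/
def Delta (G : SimpleGraph V) (F : Finset (Sym2 V)) (σ : V → Bool) : ℝ := by
  classical exact if ∀ i j, G.Adj i j → s(i, j) ∈ F → σ i = σ j then 1 else 0

/-- The Bernoulli factor `B_J(ω) = ∏_{e open} p_e ∏_{e closed} (1-p_e)`. -/
def bern [Fintype V] [DecidableEq V] (G : SimpleGraph V) [DecidableRel G.Adj]
    (p : Sym2 V → ℝ) (F : Finset (Sym2 V)) : ℝ :=
  (∏ e ∈ F, p e) * ∏ e ∈ G.edgeFinset \ F, (1 - p e)

/-- The (unnormalized) Ising Boltzmann weight with free boundary condition. -/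
def isingW [Fintype V] [DecidableEq V] (G : SimpleGraph V) [DecidableRel G.Adj]
    (β : ℝ) (J : Sym2 V → ℝ) (h : V → ℝ) (σ : V → Bool) : ℝ :=
  Real.exp (β * ((∑ e ∈ G.edgeFinset, J e * eProd σ e) + ∑ i, h i * spin (σ i)))

/-- The random-cluster weight `B_J(ω) ∏_α 2cosh(β Σ_{i∈K_α} h_i)`. -/
def rcW [Fintype V] [DecidableEq V] (G : SimpleGraph V) [DecidableRel G.Adj]
    (β : ℝ) (p : Sym2 V → ℝ) (h : V → ℝ) (F : Finset (Sym2 V)) : ℝ :=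
  bern G p F * ∏ c : (openSub G F).ConnectedComponent,
    2 * Real.cosh (β * ∑ i ∈ compSupp (openSub G F) c, h i)

/-- Expectation of `f` under the random-cluster measure with external field. -/
def rcE [Fintype V] [DecidableEq V] (G : SimpleGraph V) [DecidableRel G.Adj]
    (β : ℝ) (p : Sym2 V → ℝ) (h : V → ℝ) (f : Finset (Sym2 V) → ℝ) : ℝ :=
  (∑ F ∈ G.edgeFinset.powerset, f F * rcW G β p h F) /
    ∑ F ∈ G.edgeFinset.powerset, rcW G β p h F

/-- `h(K_z) = β Σ_{i ∈ K_z} h_i` for the component `K_z` of `z` in `F`. -/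
def hK [Fintype V] [DecidableEq V] (G : SimpleGraph V) (β : ℝ) (h : V → ℝ)
    (F : Finset (Sym2 V)) (z : V) : ℝ :=
  β * ∑ i ∈ compSupp (openSub G F) ((openSub G F).connectedComponentMk z), h i

open scoped Classical

lemma spin_mul_self (b : Bool) : spin b * spin b = 1 := by cases b <;> simp [spin]

lemma edge_factor (β : ℝ) (J p : Sym2 V → ℝ)
    (hp : ∀ e, p e = 1 - Real.exp (-(2 * β) * J e)) (σ : V → Bool) (e : Sym2 V) :
    Real.exp (β * (J e * eProd σ e))
      = Real.exp (β * J e) * (p e * eDelta σ e + (1 - p e)) := by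
  induction e using Sym2.ind with
  | _ i j =>
    simp only [eProd, eDelta, Sym2.lift_mk, hp]
    by_cases hij : σ i = σ j
    · rw [if_pos hij, hij, spin_mul_self]
      ring_nf
    · rw [if_neg hij]
      have hm : spin (σ i) * spin (σ j) = -1 := by
        cases hi : σ i <;> cases hj : σ j <;> simp_all [spin]
      rw [hm]
      rw [show (1 - (1 - Real.exp (-(2*β) * J s(i,j)))) = Real.exp (-(2*β) * J s(i,j)) by ring,
        mul_zero, zero_add, ← Real.exp_add]
      ring_nf

lemma delta_prod [Fintype V] [DecidableEq V] {G : SimpleGraph V} [DecidableRel G.Adj] {F : Finset (Sym2 V)}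
    (hF : F ⊆ G.edgeFinset) (σ : V → Bool) :
    ∏ e ∈ F, eDelta σ e = Delta G F σ := by
  unfold Delta
  split_ifs with hc
  · apply Finset.prod_eq_one
    intro e he
    induction e using Sym2.ind with
    | _ i j =>
      have hadj : G.Adj i j := by simpa [SimpleGraph.mem_edgeFinset] using hF he
      simp [eDelta, hc i j hadj he]
  · push_neg at hc
    obtain ⟨i, j, hadj, hmem, hne⟩ := hc
    exact Finset.prod_eq_zero hmem (by simp [eDelta, hne])

lemma delta_comp {G : SimpleGraph V} {F : Finset (Sym2 V)} {σ : V → Bool}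
    (hD : ∀ i j, G.Adj i j → s(i, j) ∈ F → σ i = σ j) {i j : V}
    (hc : (openSub G F).connectedComponentMk i = (openSub G F).connectedComponentMk j) :
    σ i = σ j := by
  obtain ⟨w⟩ := SimpleGraph.ConnectedComponent.exact hc
  induction w with
  | nil => rfl
  | cons ha pw ih => exact (hD _ _ (show G.Adj _ _ ∧ _ from ha).1 (show G.Adj _ _ ∧ _ from ha).2).trans (ih (SimpleGraph.ConnectedComponent.sound ⟨pw⟩))

lemma mem_compSupp [Fintype V] {H : SimpleGraph V} {c : H.ConnectedComponent} {v : V} :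
    v ∈ compSupp H c ↔ H.connectedComponentMk v = c := by
  simp [compSupp]

lemma ising_expand [Fintype V] [DecidableEq V] (G : SimpleGraph V) [DecidableRel G.Adj]
    (β : ℝ) (J : Sym2 V → ℝ) (h : V → ℝ) (p : Sym2 V → ℝ)
    (hp : ∀ e, p e = 1 - Real.exp (-(2 * β) * J e)) (σ : V → Bool) :
    isingW G β J h σ
      = (∏ e ∈ G.edgeFinset, Real.exp (β * J e)) *
          ∑ F ∈ G.edgeFinset.powerset,
            bern G p F * (Delta G F σ * Real.exp (β * ∑ i, h i * spin (σ i))) := by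
  unfold isingW
  rw [mul_add, Real.exp_add, Finset.mul_sum, Real.exp_sum]
  have h1 : ∏ e ∈ G.edgeFinset, Real.exp (β * (J e * eProd σ e))
      = (∏ e ∈ G.edgeFinset, Real.exp (β * J e)) *
        ∏ e ∈ G.edgeFinset, (p e * eDelta σ e + (1 - p e)) := by
    rw [← Finset.prod_mul_distrib]
    exact Finset.prod_congr rfl fun e _ => edge_factor β J p hp σ e
  rw [h1, Finset.prod_add, mul_assoc, Finset.mul_sum, Finset.sum_mul]
  congr 1
  apply Finset.sum_congr rfl
  intro F hF
  rw [Finset.mem_powerset] at hF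
  rw [Finset.prod_mul_distrib, delta_prod hF σ]
  unfold bern
  ring

lemma exp_spin_eq (s : Bool) (t : ℝ) :
    Real.exp (t * spin s) = 2 * Real.cosh t * (1 / 2 * (1 + spin s * Real.tanh t)) := by
  have hc := (Real.cosh_pos t).ne'
  cases s
  · simp only [spin, if_false, Real.tanh_eq_sinh_div_cosh]
    field_simp
    simp only [Bool.false_eq_true, if_false, ↓reduceIte, mul_neg_one]
    rw [← Real.cosh_sub_sinh]
    ring
  · simp only [spin, if_true, Real.tanh_eq_sinh_div_cosh]
    field_simp
    rw [Real.cosh_add_sinh]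

lemma ising_inner_sum [Fintype V] [DecidableEq V] (G : SimpleGraph V) [DecidableRel G.Adj]
    (β : ℝ) (h : V → ℝ) (F : Finset (Sym2 V)) (x : V) (s : Bool) :
    ∑ σ ∈ Finset.univ.filter (fun σ : V → Bool => σ x = s),
        Delta G F σ * Real.exp (β * ∑ i, h i * spin (σ i))
      = (∏ c : (openSub G F).ConnectedComponent,
          2 * Real.cosh (β * ∑ i ∈ compSupp (openSub G F) c, h i))
        * (1 / 2 * (1 + spin s * Real.tanh (hK G β h F x))) := by
  set H := openSub G F with hH
  set m := H.connectedComponentMk with hm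
  set c₀ := m x with hc₀
  set S : H.ConnectedComponent → ℝ := fun c => ∑ i ∈ compSupp H c, h i with hS
  set Dp : (V → Bool) → Prop := fun σ => ∀ i j, G.Adj i j → s(i, j) ∈ F → σ i = σ j with hDp
  -- Step 1: kill Delta
  have step1 : ∑ σ ∈ Finset.univ.filter (fun σ : V → Bool => σ x = s),
        Delta G F σ * Real.exp (β * ∑ i, h i * spin (σ i))
      = ∑ σ ∈ Finset.univ.filter (fun σ : V → Bool => σ x = s ∧ Dp σ),
          Real.exp (β * ∑ i, h i * spin (σ i)) := by
    rw [Finset.sum_filter, Finset.sum_filter]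
    apply Finset.sum_congr rfl
    intro σ _
    unfold Delta
    by_cases h1 : σ x = s <;> by_cases h2 : Dp σ
    · rw [if_pos h1, if_pos h2, if_pos ⟨h1, h2⟩, one_mul]
    · rw [if_pos h1, if_neg h2, if_neg (fun hh => h2 hh.2), zero_mul]
    · rw [if_neg h1, if_neg (fun hh => h1 hh.1)]
    · rw [if_neg h1, if_neg (fun hh => h1 hh.1)]
  -- Step 2: reindex by component colourings
  have step2 : ∑ σ ∈ Finset.univ.filter (fun σ : V → Bool => σ x = s ∧ Dp σ),
        Real.exp (β * ∑ i, h i * spin (σ i))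
      = ∑ τ ∈ Finset.univ.filter (fun τ : H.ConnectedComponent → Bool => τ c₀ = s),
          Real.exp (β * ∑ i, h i * spin (τ (m i))) := by
    apply Finset.sum_bij' (i := fun σ _ => fun c : H.ConnectedComponent => σ c.out)
      (j := fun τ _ => τ ∘ m)
    · intro σ hσ
      rw [Finset.mem_filter] at hσ ⊢
      obtain ⟨-, h1, h2⟩ := hσ
      refine ⟨Finset.mem_univ _, ?_⟩
      rw [← h1]
      exact delta_comp h2 (c₀.out_eq.trans hc₀)
    · intro τ hτ
      rw [Finset.mem_filter] at hτ ⊢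
      refine ⟨Finset.mem_univ _, hτ.2, ?_⟩
      intro i j hadj hmem
      have : m i = m j := SimpleGraph.ConnectedComponent.sound
        (SimpleGraph.Adj.reachable (show H.Adj i j from (⟨hadj, hmem⟩ : G.Adj i j ∧ s(i, j) ∈ F)))
      simp [Function.comp, this]
    · intro σ hσ
      rw [Finset.mem_filter] at hσ
      funext v
      exact delta_comp hσ.2.2 ((m v).out_eq)
    · intro τ _
      funext c
      exact congrArg τ c.out_eq
    · intro σ hσ
      rw [Finset.mem_filter] at hσ
      congr 1
      congr 1
      apply Finset.sum_congr rfl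
      intro i _
      congr 1
      congr 1
      first
      | exact (delta_comp hσ.2.2 ((m i).out_eq)).symm
      | exact delta_comp hσ.2.2 ((m i).out_eq)
      | exact delta_comp hσ.2.2 ((m i).out_eq).symm
  -- Step 3: factor over components
  have step3 : ∀ τ : H.ConnectedComponent → Bool,
      Real.exp (β * ∑ i, h i * spin (τ (m i)))
        = ∏ c, Real.exp (β * S c * spin (τ c)) := by
    intro τ
    rw [← Real.exp_sum]
    congr 1
    rw [← Finset.sum_fiberwise Finset.univ m (fun i => h i * spin (τ (m i))), Finset.mul_sum]
    apply Finset.sum_congr rfl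
    intro c _
    have : ∑ i ∈ Finset.univ.filter (fun i => m i = c), h i * spin (τ (m i))
        = ∑ i ∈ Finset.univ.filter (fun i => m i = c), h i * spin (τ c) := by
      apply Finset.sum_congr rfl
      intro i hi
      rw [Finset.mem_filter] at hi
      rw [hi.2]
    rw [this, ← Finset.sum_mul, hS]
    have hsupp : compSupp H c = Finset.univ.filter (fun i => m i = c) := by
      unfold compSupp
      exact Finset.filter_congr_decidable _ _ _
    simp only [hsupp]
    ring
  set g' : H.ConnectedComponent → Bool → ℝ :=
    fun c b => if c = c₀ ∧ b ≠ s then 0 else Real.exp (β * S c * spin b) with hg'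
  have step4 : ∑ τ ∈ Finset.univ.filter (fun τ : H.ConnectedComponent → Bool => τ c₀ = s),
        ∏ c, Real.exp (β * S c * spin (τ c))
      = ∑ τ : H.ConnectedComponent → Bool, ∏ c, g' c (τ c) := by
    rw [Finset.sum_filter]
    apply Finset.sum_congr rfl
    intro τ _
    by_cases hτ : τ c₀ = s
    · rw [if_pos hτ]
      apply Finset.prod_congr rfl
      intro c _
      simp only [hg']
      rw [if_neg]
      rintro ⟨hc, hb⟩
      exact hb (hc ▸ hτ)
    · rw [if_neg hτ]
      symm
      exact Finset.prod_eq_zero (Finset.mem_univ c₀) (by simp [hg', hτ])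
  have step5 : ∑ τ : H.ConnectedComponent → Bool, ∏ c, g' c (τ c)
      = ∏ c, ∑ b : Bool, g' c b := by
    have := Finset.prod_univ_sum (fun _ : H.ConnectedComponent => (Finset.univ : Finset Bool)) g'
    rw [Fintype.piFinset_univ] at this
    rw [this]
  have hsum0 : ∑ b : Bool, g' c₀ b = Real.exp (β * S c₀ * spin s) := by
    rw [Fintype.sum_bool]
    cases s <;> simp [hg', spin]
  have hsum1 : ∀ c, c ≠ c₀ → ∑ b : Bool, g' c b = 2 * Real.cosh (β * S c) := by
    intro c hc
    rw [Fintype.sum_bool]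
    simp [hg', hc, spin]
    rw [Real.cosh_eq]
    ring
  have step6 : ∏ c, ∑ b : Bool, g' c b
      = Real.exp (β * S c₀ * spin s) * ∏ c ∈ Finset.univ.erase c₀, 2 * Real.cosh (β * S c) := by
    rw [← Finset.mul_prod_erase Finset.univ _ (Finset.mem_univ c₀), hsum0]
    congr 1
    exact Finset.prod_congr rfl fun c hc => hsum1 c (Finset.ne_of_mem_erase hc)
  have hprodall : ∏ c : H.ConnectedComponent,
        2 * Real.cosh (β * ∑ i ∈ compSupp (openSub G F) c, h i)
      = 2 * Real.cosh (β * S c₀) * ∏ c ∈ Finset.univ.erase c₀, 2 * Real.cosh (β * S c) := by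
    rw [← Finset.mul_prod_erase Finset.univ _ (Finset.mem_univ c₀)]
  have hhK : hK G β h F x = β * S c₀ := rfl
  calc ∑ σ ∈ Finset.univ.filter (fun σ : V → Bool => σ x = s),
        Delta G F σ * Real.exp (β * ∑ i, h i * spin (σ i))
      = ∑ τ ∈ Finset.univ.filter (fun τ : H.ConnectedComponent → Bool => τ c₀ = s),
          ∏ c, Real.exp (β * S c * spin (τ c)) := by
        rw [step1, step2]
        exact Finset.sum_congr rfl fun τ _ => step3 τ
    _ = Real.exp (β * S c₀ * spin s) * ∏ c ∈ Finset.univ.erase c₀, 2 * Real.cosh (β * S c) := by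
        rw [step4, step5, step6]
    _ = _ := by
        rw [hprodall, hhK, exp_spin_eq]
        ring

lemma key_sum [Fintype V] [DecidableEq V] (G : SimpleGraph V) [DecidableRel G.Adj]
    (β : ℝ) (J : Sym2 V → ℝ) (h : V → ℝ) (p : Sym2 V → ℝ)
    (hp : ∀ e, p e = 1 - Real.exp (-(2 * β) * J e)) (x : V) (s : Bool) :
    ∑ σ ∈ Finset.univ.filter (fun σ : V → Bool => σ x = s), isingW G β J h σ
      = (∏ e ∈ G.edgeFinset, Real.exp (β * J e)) *
          ∑ F ∈ G.edgeFinset.powerset,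
            rcW G β p h F * (1 / 2 * (1 + spin s * Real.tanh (hK G β h F x))) := by
  have e1 : ∀ σ ∈ Finset.univ.filter (fun σ : V → Bool => σ x = s),
      isingW G β J h σ = (∏ e ∈ G.edgeFinset, Real.exp (β * J e)) *
        ∑ F ∈ G.edgeFinset.powerset,
          bern G p F * (Delta G F σ * Real.exp (β * ∑ i, h i * spin (σ i))) :=
    fun σ _ => ising_expand G β J h p hp σ
  rw [Finset.sum_congr rfl e1, ← Finset.mul_sum, Finset.sum_comm]
  congr 1
  apply Finset.sum_congr rfl
  intro F _
  rw [← Finset.mul_sum, ising_inner_sum G β h F x s]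
  unfold rcW
  ring

lemma rcW_nonneg [Fintype V] [DecidableEq V] (G : SimpleGraph V) [DecidableRel G.Adj]
    (β : ℝ) (hβ : 0 < β) (J : Sym2 V → ℝ) (hJ : ∀ e ∈ G.edgeFinset, 0 ≤ J e)
    (h : V → ℝ) (p : Sym2 V → ℝ) (hp : ∀ e, p e = 1 - Real.exp (-(2 * β) * J e))
    {F : Finset (Sym2 V)} (hF : F ⊆ G.edgeFinset) : 0 ≤ rcW G β p h F := by
  unfold rcW bern
  apply mul_nonneg
  apply mul_nonneg
  · apply Finset.prod_nonneg
    intro e he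
    rw [hp]
    have : -(2 * β) * J e ≤ 0 := by
      have := hJ e (hF he)
      nlinarith
    nlinarith [Real.exp_le_one_iff.mpr this]
  · apply Finset.prod_nonneg
    intro e _
    rw [hp]
    have := Real.exp_pos (-(2 * β) * J e)
    linarith
  · exact Finset.prod_nonneg fun c _ => by positivity

lemma rcW_empty_pos [Fintype V] [DecidableEq V] (G : SimpleGraph V) [DecidableRel G.Adj]
    (β : ℝ) (J : Sym2 V → ℝ) (h : V → ℝ) (p : Sym2 V → ℝ)
    (hp : ∀ e, p e = 1 - Real.exp (-(2 * β) * J e)) : 0 < rcW G β p h ∅ := by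
  unfold rcW bern
  apply mul_pos
  · rw [Finset.prod_empty, one_mul]
    apply Finset.prod_pos
    intro e _
    rw [hp]
    have := Real.exp_pos (-(2 * β) * J e)
    linarith
  · exact Finset.prod_pos fun c _ => by positivity

lemma Zrc_pos [Fintype V] [DecidableEq V] (G : SimpleGraph V) [DecidableRel G.Adj]
    (β : ℝ) (hβ : 0 < β) (J : Sym2 V → ℝ) (hJ : ∀ e ∈ G.edgeFinset, 0 ≤ J e)
    (h : V → ℝ) (p : Sym2 V → ℝ) (hp : ∀ e, p e = 1 - Real.exp (-(2 * β) * J e)) :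
    0 < ∑ F ∈ G.edgeFinset.powerset, rcW G β p h F := by
  apply Finset.sum_pos'
  · intro F hF
    exact rcW_nonneg G β hβ J hJ h p hp (Finset.mem_powerset.mp hF)
  · exact ⟨∅, Finset.empty_mem_powerset _, rcW_empty_pos G β J h p hp⟩

open scoped Classical in
/-- Theorem (distribution function of a single spin) and its corollary: the
sign `±1` is encoded by `s : Bool` with `spin s = ±1`, so the first claim reads
`λ(σ_x = ±1) = 1/2 ± (1/2) φ(tanh h(K_t))`; the second claim is
`λ(σ_x) = φ(tanh h(K_t))`. -/
theorem statement11 [Fintype V] [DecidableEq V]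
    (G : SimpleGraph V) [DecidableRel G.Adj]
    (β : ℝ) (hβ : 0 < β)
    (J : Sym2 V → ℝ) (hJ : ∀ e ∈ G.edgeFinset, 0 ≤ J e)
    (h : V → ℝ)
    (p : Sym2 V → ℝ) (hp : ∀ e, p e = 1 - Real.exp (-(2 * β) * J e))
    (x : V) :
    (∀ s : Bool,
      (∑ σ ∈ Finset.univ.filter (fun σ : V → Bool => σ x = s), isingW G β J h σ) /
          (∑ σ : V → Bool, isingW G β J h σ)
        = 1 / 2 + spin s * (1 / 2 * rcE G β p h (fun F => Real.tanh (hK G β h F x))))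
    ∧ (∑ σ : V → Bool, spin (σ x) * isingW G β J h σ) /
          (∑ σ : V → Bool, isingW G β J h σ)
        = rcE G β p h (fun F => Real.tanh (hK G β h F x)) := by
  set C := ∏ e ∈ G.edgeFinset, Real.exp (β * J e) with hCdef
  set Zrc := ∑ F ∈ G.edgeFinset.powerset, rcW G β p h F with hZdef
  set T := ∑ F ∈ G.edgeFinset.powerset,
      Real.tanh (hK G β h F x) * rcW G β p h F with hTdef
  have hC : 0 < C := Finset.prod_pos fun _ _ => Real.exp_pos _
  have hZ : 0 < Zrc := Zrc_pos G β hβ J hJ h p hp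
  have hrcE : rcE G β p h (fun F => Real.tanh (hK G β h F x)) = T / Zrc := rfl
  have hneg : Finset.univ.filter (fun σ : V → Bool => ¬(σ x = true))
      = Finset.univ.filter (fun σ : V → Bool => σ x = false) := by
    apply Finset.filter_congr
    intro σ _
    simp
  have hkey : ∀ s : Bool,
      ∑ σ ∈ Finset.univ.filter (fun σ : V → Bool => σ x = s), isingW G β J h σ
        = C * (1 / 2 * Zrc + spin s * (1 / 2 * T)) := by
    intro s
    rw [key_sum G β J h p hp x s]
    congr 1
    have e0 : ∀ F ∈ G.edgeFinset.powerset,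
        rcW G β p h F * (1 / 2 * (1 + spin s * Real.tanh (hK G β h F x)))
          = 1 / 2 * rcW G β p h F
            + spin s * (1 / 2 * (Real.tanh (hK G β h F x) * rcW G β p h F)) :=
      fun F _ => by ring
    rw [Finset.sum_congr rfl e0, Finset.sum_add_distrib, ← Finset.mul_sum, ← Finset.mul_sum,
      ← Finset.mul_sum]
  have hZi : ∑ σ : V → Bool, isingW G β J h σ = C * Zrc := by
    rw [← Finset.sum_filter_add_sum_filter_not Finset.univ
      (fun σ : V → Bool => σ x = true) (isingW G β J h), hneg, hkey true, hkey false,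
      ← mul_add]
    rw [show spin true = (1:ℝ) from rfl, show spin false = (-1:ℝ) from rfl]
    ring
  have part1 : ∀ s : Bool,
      (∑ σ ∈ Finset.univ.filter (fun σ : V → Bool => σ x = s), isingW G β J h σ) /
          (∑ σ : V → Bool, isingW G β J h σ)
        = 1 / 2 + spin s * (1 / 2 * rcE G β p h (fun F => Real.tanh (hK G β h F x))) := by
    intro s
    rw [hkey s, hZi, hrcE]
    field_simp
  refine ⟨part1, ?_⟩
  have hnum : ∑ σ : V → Bool, spin (σ x) * isingW G β J h σ = C * T := by
    rw [← Finset.sum_filter_add_sum_filter_not Finset.univ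
      (fun σ : V → Bool => σ x = true)
      (fun σ => spin (σ x) * isingW G β J h σ), hneg]
    have h1 : ∑ σ ∈ Finset.univ.filter (fun σ : V → Bool => σ x = true),
        spin (σ x) * isingW G β J h σ
        = ∑ σ ∈ Finset.univ.filter (fun σ : V → Bool => σ x = true), isingW G β J h σ := by
      apply Finset.sum_congr rfl
      intro σ hσ
      rw [Finset.mem_filter] at hσ
      rw [hσ.2]
      simp [spin]
    have h2 : ∑ σ ∈ Finset.univ.filter (fun σ : V → Bool => σ x = false),
        spin (σ x) * isingW G β J h σ
        = -∑ σ ∈ Finset.univ.filter (fun σ : V → Bool => σ x = false), isingW G β J h σ := by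
      rw [← Finset.sum_neg_distrib]
      apply Finset.sum_congr rfl
      intro σ hσ
      rw [Finset.mem_filter] at hσ
      rw [hσ.2]
      simp [spin]
    rw [h1, h2, hkey true, hkey false]
    rw [show spin true = (1:ℝ) from rfl, show spin false = (-1:ℝ) from rfl]
    ring
  rw [hnum, hZi, hrcE, mul_div_mul_left T Zrc hC.ne']


end
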